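/- Let m ≤ -1, M ≤ -2m, a ∈ ℝ, b > 1. Then there is no C³ function f : [0,∞) → ℝ satisfying f''' + ((m+1)/2)·f·f'' + m·(1-(f')²) + M·(1-f') = 0 with f(0)=a, f'(0)=b, lim_{t→∞} f'(t)=1, f'' < 0 on [0,∞) (i.e., no concave solution exists). -/

import Mathlib

open Filter

theorem stmt_12 (m M a b : ℝ) (hm : m ≤ -1) (hM : M ≤ -2 * m) (hb : 1 < b) :
    ¬ ∃ f : ℝ → ℝ, ContDiff ℝ 3 f ∧
      (∀ t : ℝ, 0 ≤ t →
        deriv (deriv (deriv f)) t + (m + 1) / 2 * f t * deriv (deriv f) t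
          + m * (1 - (deriv f t) ^ 2) + M * (1 - deriv f t) = 0) ∧
      f 0 = a ∧ deriv f 0 = b ∧ Tendsto (deriv f) atTop (nhds 1) ∧
      (∀ t : ℝ, 0 ≤ t → deriv (deriv f) t < 0) := by
  rintro ⟨f, hf3, hode, hf0, hdf0, hlim, hcc⟩
  have hf2 : ContDiff ℝ 2 (deriv f) :=
    ((contDiff_succ_iff_deriv.mp (show ContDiff ℝ ((2:ℕ)+1) f by exact_mod_cast hf3)).2).2
  have hf1 : ContDiff ℝ 1 (deriv (deriv f)) :=
    ((contDiff_succ_iff_deriv.mp (show ContDiff ℝ ((1:ℕ)+1) (deriv f) by exact_mod_cast hf2)).2).2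
  have hdf : Differentiable ℝ f := hf3.differentiable (by norm_num)
  have hdf' : Differentiable ℝ (deriv f) := hf2.differentiable (by norm_num)
  have hdf'' : Differentiable ℝ (deriv (deriv f)) := hf1.differentiable (by norm_num)
  -- f' is strictly decreasing on [0, ∞)
  have hanti : StrictAntiOn (deriv f) (Set.Ici (0:ℝ)) := by
    refine strictAntiOn_of_deriv_neg (convex_Ici 0) hdf'.continuous.continuousOn ?_
    intro x hx
    rw [interior_Ici] at hx
    exact hcc x hx.le
  -- f' ≥ 1 on [0, ∞)
  have hge : ∀ t : ℝ, 0 ≤ t → 1 ≤ deriv f t := by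
    intro t ht
    refine le_of_tendsto hlim ?_
    filter_upwards [eventually_ge_atTop t] with s hs
    exact hanti.antitoneOn ht (le_trans ht hs) hs
  -- f' > 1 on [0, ∞)
  have hgt : ∀ t : ℝ, 0 ≤ t → 1 < deriv f t := by
    intro t ht
    have h1 := hge (t + 1) (by linarith)
    have h2 := hanti ht (show t + 1 ∈ Set.Ici (0:ℝ) by simp; linarith) (by linarith)
    linarith
  -- f t ≥ a + t on [0, ∞)
  have hflb : ∀ t : ℝ, 0 ≤ t → a + t ≤ f t := by
    have hmono : MonotoneOn (fun t => f t - t) (Set.Ici (0:ℝ)) := by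
      refine monotoneOn_of_deriv_nonneg (convex_Ici 0)
        ((hdf.sub differentiable_id).continuous.continuousOn)
        ((hdf.sub differentiable_id).differentiableOn) ?_
      intro x hx
      rw [interior_Ici] at hx
      have hder : HasDerivAt (fun t => f t - t) (deriv f x - 1) x :=
        (hdf x).hasDerivAt.sub (hasDerivAt_id x)
      rw [hder.deriv]
      have := hgt x hx.le
      linarith
    intro t ht
    have := hmono (Set.self_mem_Ici) ht ht
    simp only [hf0] at this
    linarith
  set T0 : ℝ := max 0 (1 - a) with hT0
  have hT0nn : (0:ℝ) ≤ T0 := le_max_left _ _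
  -- f''' < 0 on [T0, ∞)
  have hneg : ∀ t : ℝ, T0 ≤ t → deriv (deriv (deriv f)) t < 0 := by
    intro t ht
    have htn : (0:ℝ) ≤ t := le_trans hT0nn ht
    have hfpos : 0 < f t := by
      have h1 : 1 - a ≤ t := le_trans (le_max_right _ _) ht
      have := hflb t htn
      linarith
    have hx := hgt t htn
    have hfpp := hcc t htn
    have heq := hode t htn
    set x := deriv f t
    have hQ : -m * (x - 1) ^ 2 ≤ m * (1 - x ^ 2) + M * (1 - x) := by nlinarith
    have hterm : 0 ≤ (m + 1) / 2 * f t * deriv (deriv f) t := by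
      have h1 : (0:ℝ) ≤ -((m + 1) / 2) := by linarith
      have h2 : (0:ℝ) ≤ -(deriv (deriv f) t) := by linarith
      nlinarith [mul_nonneg (mul_nonneg h1 hfpos.le) h2]
    nlinarith
  -- f'' is antitone on [T0, ∞)
  have hanti2 : AntitoneOn (deriv (deriv f)) (Set.Ici T0) := by
    refine antitoneOn_of_deriv_nonpos (convex_Ici T0) hdf''.continuous.continuousOn
      hdf''.differentiableOn ?_
    intro x hx
    rw [interior_Ici] at hx
    exact (hneg x hx.le).le
  set T1 : ℝ := T0 + 1 with hT1
  set c : ℝ := deriv (deriv f) T1 with hc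
  have hcneg : c < 0 := hcc T1 (by linarith)
  -- f'' ≤ c on [T1, ∞)
  have hle : ∀ t : ℝ, T1 ≤ t → deriv (deriv f) t ≤ c :=
    fun t ht => hanti2 (show T1 ∈ Set.Ici T0 by simp [hT1]) (by simp; linarith) ht
  -- t ↦ f' t - c * t is antitone on [T1, ∞)
  have hanti3 : AntitoneOn (fun t => deriv f t - c * t) (Set.Ici T1) := by
    refine antitoneOn_of_deriv_nonpos (convex_Ici T1)
      ((hdf'.sub ((differentiable_const c).mul differentiable_id)).continuous.continuousOn)
      ((hdf'.sub ((differentiable_const c).mul differentiable_id)).differentiableOn) ?_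
    intro x hx
    rw [interior_Ici] at hx
    have hder : HasDerivAt (fun t => deriv f t - c * t) (deriv (deriv f) x - c) x := by
      have := (hdf' x).hasDerivAt.sub ((hasDerivAt_id x).const_mul c)
      exact this.congr_deriv (by ring)
    rw [hder.deriv]
    have := hle x hx.le
    linarith
  set d : ℝ := deriv f T1 with hd
  have hd1 : 1 ≤ d := hge T1 (by linarith)
  set q : ℝ := (1 - d) / c with hqdef
  have hq : c * q = 1 - d := by
    rw [hqdef, mul_div_cancel₀ _ (ne_of_lt hcneg)]
  have hquot : 0 ≤ q := by
    by_contra h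
    push_neg at h
    nlinarith [mul_pos_of_neg_of_neg hcneg h]
  have htT1 : T1 ≤ T1 + q + 1 := by linarith
  have h4 := hanti3 (Set.self_mem_Ici) (show T1 + q + 1 ∈ Set.Ici T1 by simp; linarith) htT1
  simp only at h4
  have hct : c * (T1 + q + 1) = c * T1 + (1 - d) + c := by
    rw [mul_add, mul_add, hq, mul_one]
  have hlt1 : deriv f (T1 + q + 1) < 1 := by
    rw [hct] at h4
    linarith
  have := hge (T1 + q + 1) (by linarith)
  linarith
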